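/- For all positive integers r, s and n, the number a_{r,s}(n) of permutations π of {1,…,n} such that π_{i+r} − π_i ≠ s for all 1 ≤ i ≤ n−r equals Σ_α C^{(n,s)}_α · C^{(n,r)}_α · (−1)^{n − (a_1 + a_2 + ⋯ + a_n)} · a_1! · a_2! ⋯ a_n!, where the sum ranges over all integer partitions α of n, a_m denotes the multiplicity of the part m in α, and C^{(n,r)}_α denotes the number of set partitions of {1,…,n} in which every block is of the form {k, k+r, k+2r, …, k+(m−1)r} for some k and some m ≥ 1, and whose multiset of block sizes equals α. -/

import Mathlib

/-- The set of permutations `π` of `{0,…,n-1}` (equivalently `{1,…,n}`) such that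
`π (i+r) - π i ≠ s` for all valid indices `i`; its cardinality is `a_{r,s}(n)`. -/
def noShift (r s n : ℕ) : Finset (Equiv.Perm (Fin n)) :=
  Finset.univ.filter fun π =>
    ∀ i j : Fin n, (j : ℕ) = (i : ℕ) + r →
      ((π j : ℕ) : ℤ) - ((π i : ℕ) : ℤ) ≠ (s : ℤ)

/-- `C^{(n,r)}_α`: the number of set partitions of `{0,…,n-1}` (equivalently `{1,…,n}`)
in which every block is an arithmetic progression with common difference `r`,
i.e. of the form `{k, k+r, …, k+(m-1)r}` for some `k` and some `m ≥ 1`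
(singleton blocks qualify), and whose multiset of block sizes equals the
partition `α` of `n`. -/
noncomputable def tilingCount (n r : ℕ) (α : Nat.Partition n) : ℕ :=
  Nat.card {P : Finpartition (Finset.univ : Finset (Fin n)) //
    (∀ b ∈ P.parts, ∃ k m : ℕ, 1 ≤ m ∧
      b.image (Fin.val) = (Finset.range m).image (fun t => k + t * r)) ∧
    P.parts.val.map Finset.card = α.parts}


section NoShiftAux
open Finset

namespace NoShiftProof

/-- The start of the chain containing `i`, following links in `S` downward by `r`. -/
def startOf (r : ℕ) (S : Finset ℕ) (i : ℕ) : ℕ :=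
  if h : 0 < r ∧ r ≤ i ∧ i - r ∈ S then startOf r S (i - r) else i
  termination_by i
  decreasing_by omega

variable {r : ℕ} {S : Finset ℕ}

lemma startOf_of_neg (h : ¬(0 < r ∧ r ≤ i ∧ i - r ∈ S)) : startOf r S i = i := by
  rw [startOf, dif_neg h]

lemma startOf_of_pos (h : 0 < r ∧ r ≤ i ∧ i - r ∈ S) :
    startOf r S i = startOf r S (i - r) := by
  rw [startOf, dif_pos h]

lemma startOf_mem_step (hr : 0 < r) (hi : i ∈ S) : startOf r S (i + r) = startOf r S i := by
  rw [startOf_of_pos ⟨hr, by omega, by simpa using hi⟩]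
  simp

lemma startOf_not_link (r : ℕ) (S : Finset ℕ) (i : ℕ) :
    ¬(0 < r ∧ r ≤ startOf r S i ∧ startOf r S i - r ∈ S) := by
  induction i using Nat.strong_induction_on with
  | _ i ih =>
    by_cases h : 0 < r ∧ r ≤ i ∧ i - r ∈ S
    · rw [startOf_of_pos h]; exact ih (i - r) (by omega)
    · rw [startOf_of_neg h]; exact h

lemma startOf_idem (r : ℕ) (S : Finset ℕ) (i : ℕ) :
    startOf r S (startOf r S i) = startOf r S i :=
  startOf_of_neg (startOf_not_link r S i)

lemma startOf_spec (r : ℕ) (S : Finset ℕ) (i : ℕ) :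
    ∃ t, startOf r S i + t * r = i ∧ ∀ u < t, startOf r S i + u * r ∈ S := by
  induction i using Nat.strong_induction_on with
  | _ i ih =>
    by_cases h : 0 < r ∧ r ≤ i ∧ i - r ∈ S
    · rw [startOf_of_pos h]
      obtain ⟨t, ht, hS⟩ := ih (i - r) (by omega)
      have hmul : (t + 1) * r = t * r + r := by ring
      refine ⟨t + 1, by omega, fun u hu => ?_⟩
      rcases Nat.lt_or_ge u t with h' | h'
      · exact hS u h'
      · have : u = t := by omega
        subst this
        have : startOf r S (i - r) + u * r = i - r := ht
        have : startOf r S (i - r) + u * r ∈ S := by rw [this]; exact h.2.2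
        exact this
    · rw [startOf_of_neg h]; exact ⟨0, by omega, by omega⟩

lemma startOf_chain (hr : 0 < r) {k : ℕ} (hk : startOf r S k = k) (t : ℕ)
    (hS : ∀ u < t, k + u * r ∈ S) : startOf r S (k + t * r) = k := by
  induction t with
  | zero => simpa using hk
  | succ t ih =>
    have h1 : k + (t + 1) * r = (k + t * r) + r := by ring
    rw [h1, startOf_mem_step hr (hS t (by omega))]
    exact ih fun u hu => hS u (by omega)

lemma startOf_le (r : ℕ) (S : Finset ℕ) (i : ℕ) : startOf r S i ≤ i := by
  obtain ⟨t, ht, -⟩ := startOf_spec r S i; omega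

end NoShiftProof

namespace NoShiftProof

variable {r : ℕ} {S : Finset ℕ}

/-- The set of elements of `{0,…,n-1}` whose chain-start is `k`. -/
def fiber (r n : ℕ) (S : Finset ℕ) (k : ℕ) : Finset ℕ :=
  (Finset.range n).filter (fun i => startOf r S i = k)

lemma downclosed_eq_range {T : Finset ℕ} (h : ∀ t, t + 1 ∈ T → t ∈ T) :
    T = Finset.range T.card := by
  have hmono : ∀ u t, u ≤ t → t ∈ T → u ∈ T := by
    intro u t hut ht
    induction t with
    | zero => simpa [Nat.le_zero.mp hut] using ht
    | succ t ih =>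
      rcases Nat.eq_or_lt_of_le hut with rfl | h'
      · exact ht
      · exact ih (by omega) (h t ht)
  have key : ∀ t, t ∈ T ↔ t < T.card := by
    intro t
    constructor
    · intro ht
      have hsub : Finset.range (t + 1) ⊆ T := fun u hu =>
        hmono u t (by simpa using Nat.lt_succ_iff.mp (Finset.mem_range.mp hu)) ht
      have := Finset.card_le_card hsub
      simpa using this
    · intro ht
      by_contra hne
      have hsub : T ⊆ Finset.range t := by
        intro u hu
        rw [Finset.mem_range]
        by_contra h'
        exact hne (hmono t u (by omega) hu)
      have := Finset.card_le_card hsub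
      simp at this
      omega
  ext t; simp [key]

lemma fiber_structure (hr : 0 < r) {n k : ℕ} (hkn : k < n) (hk : startOf r S k = k) :
    ∃ m, 0 < m ∧ fiber r n S k = (Finset.range m).image (fun t => k + t * r) ∧
      (∀ u, u + 1 < m → k + u * r ∈ S) ∧ (∀ u, u < m → k + u * r < n) := by
  classical
  set T : Finset ℕ := (Finset.range n).filter (fun t => k + t * r < n ∧ startOf r S (k + t * r) = k)
    with hT
  have hstep : ∀ t, t + 1 ∈ T → t ∈ T ∧ k + t * r ∈ S := by
    intro t ht
    rw [hT, Finset.mem_filter] at ht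
    obtain ⟨-, hlt, hst⟩ := ht
    set i := k + (t + 1) * r with hi
    have hik : k < i := by have : 1 * r ≤ (t+1) * r := Nat.mul_le_mul_right r (by omega); omega
    have hcond : 0 < r ∧ r ≤ i ∧ i - r ∈ S := by
      by_contra hc
      have := startOf_of_neg (i := i) hc
      omega
    have hstep2 : startOf r S (i - r) = k := by
      have := startOf_of_pos (i := i) hcond
      omega
    have hir : i - r = k + t * r := by
      have h' : (t+1) * r = t * r + r := by ring
      omega
    rw [hir] at hstep2 hcond
    have htr : t ≤ t * r := Nat.le_mul_of_pos_right t hr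
    refine ⟨?_, by simpa using hcond.2.2⟩
    rw [hT, Finset.mem_filter, Finset.mem_range]
    exact ⟨by omega, by omega, hstep2⟩
  have hTr : T = Finset.range T.card := downclosed_eq_range (fun t ht => (hstep t ht).1)
  refine ⟨T.card, ?_, ?_, ?_, ?_⟩
  · have h0 : 0 ∈ T := by
      rw [hT, Finset.mem_filter, Finset.mem_range]
      exact ⟨by omega, by simpa using hkn, by simpa using hk⟩
    exact Finset.card_pos.mpr ⟨0, h0⟩
  · ext i
    simp only [fiber, Finset.mem_filter, Finset.mem_range, Finset.mem_image]
    constructor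
    · rintro ⟨hin, hsi⟩
      obtain ⟨t, ht, -⟩ := startOf_spec r S i
      rw [hsi] at ht
      refine ⟨t, ?_, by omega⟩
      have htT : t ∈ T := by
        rw [hT, Finset.mem_filter, Finset.mem_range]
        have htr : t ≤ t * r := Nat.le_mul_of_pos_right t hr
        exact ⟨by omega, by omega, by rw [show k + t * r = i by omega]; exact hsi⟩
      rw [hTr] at htT
      simpa using htT
    · rintro ⟨t, ht, rfl⟩
      have htT : t ∈ T := by rw [hTr]; simpa using ht
      rw [hT, Finset.mem_filter] at htT
      exact ⟨htT.2.1, htT.2.2⟩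
  · intro u hu
    have : u + 1 ∈ T := by rw [hTr]; simpa using hu
    exact (hstep u this).2
  · intro u hu
    have : u ∈ T := by rw [hTr]; simpa using hu
    rw [hT, Finset.mem_filter] at this
    exact this.2.1

end NoShiftProof

namespace NoShiftProof

instance kerDec {α β : Type*} [DecidableEq β] (f : α → β) : DecidableRel (Setoid.ker f).r :=
  fun a b => decidable_of_iff (f a = f b) Iff.rfl

/-- The partition of `Fin n` into chains determined by the link set `S`. -/
def domP (r n : ℕ) (S : Finset ℕ) : Finpartition (univ : Finset (Fin n)) :=
  Finpartition.ofSetoid (Setoid.ker (fun i : Fin n => startOf r S i.val))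

variable {r n : ℕ} {S : Finset ℕ}

lemma mem_domP_part {a j : Fin n} :
    j ∈ (domP r n S).part a ↔ startOf r S j.val = startOf r S a.val := by
  rw [domP, Finpartition.mem_part_ofSetoid_iff_rel]
  exact ⟨fun h => h.symm, fun h => h.symm⟩

lemma part_mem_parts {α : Type*} [DecidableEq α] [Fintype α]
    (P : Finpartition (univ : Finset α)) (a : α) : P.part a ∈ P.parts :=
  P.part_mem.mpr (mem_univ a)

lemma mem_parts_iff_part {α : Type*} [DecidableEq α] [Fintype α]
    (P : Finpartition (univ : Finset α)) {b : Finset α} :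
    b ∈ P.parts ↔ ∃ a, P.part a = b := by
  constructor
  · intro hb
    obtain ⟨a, ha⟩ := P.nonempty_of_mem_parts hb
    exact ⟨a, P.part_eq_of_mem hb ha⟩
  · rintro ⟨a, rfl⟩
    exact part_mem_parts P a

lemma finpartition_eq_of_part_eq {α : Type*} [DecidableEq α] [Fintype α]
    {P Q : Finpartition (univ : Finset α)} (h : ∀ a, P.part a = Q.part a) : P = Q := by
  apply Finpartition.ext
  ext b
  rw [mem_parts_iff_part, mem_parts_iff_part]
  simp_rw [h]

lemma image_val_filter (p : ℕ → Prop) [DecidablePred p] :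
    ((univ : Finset (Fin n)).filter (fun j => p j.val)).image Fin.val
      = (Finset.range n).filter p := by
  ext x
  simp only [mem_image, mem_filter, mem_univ, true_and, mem_range]
  constructor
  · rintro ⟨j, hj, rfl⟩; exact ⟨j.isLt, hj⟩
  · rintro ⟨hx, hp⟩; exact ⟨⟨x, hx⟩, hp, rfl⟩

lemma domP_part_image (a : Fin n) :
    ((domP r n S).part a).image Fin.val = fiber r n S (startOf r S a.val) := by
  have : (domP r n S).part a
      = (univ : Finset (Fin n)).filter (fun j => startOf r S j.val = startOf r S a.val) := by
    ext j; rw [mem_domP_part]; simp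
  rw [this, image_val_filter (fun x => startOf r S x = startOf r S a.val)]
  rfl

/-- `domP` is a partition into arithmetic progressions with difference `r`. -/
lemma domP_APgood (hr : 0 < r) {b : Finset (Fin n)} (hb : b ∈ (domP r n S).parts) :
    ∃ k m : ℕ, 1 ≤ m ∧ b.image Fin.val = (Finset.range m).image (fun t => k + t * r) := by
  obtain ⟨a, rfl⟩ := (mem_parts_iff_part _).mp hb
  obtain ⟨m, hm, hfib, -, -⟩ := fiber_structure (S := S) hr
    (n := n) (k := startOf r S a.val) (lt_of_le_of_lt (startOf_le r S a.val) a.isLt)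
    (startOf_idem r S a.val)
  exact ⟨startOf r S a.val, m, hm, by rw [domP_part_image, hfib]⟩

/-- The start elements. -/
def starts (r n : ℕ) (S : Finset ℕ) : Finset ℕ :=
  (Finset.range n).filter (fun k => startOf r S k = k)

lemma domP_parts_card (hr : 0 < r) (hS : S ⊆ Finset.range (n - r)) :
    S.card + (domP r n S).parts.card = n := by
  -- parts ↔ starts
  have h1 : (domP r n S).parts
      = (starts r n S).image
          (fun k => (univ : Finset (Fin n)).filter (fun j => startOf r S j.val = k)) := by
    ext b
    rw [mem_parts_iff_part]
    constructor
    · rintro ⟨a, rfl⟩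
      refine mem_image.mpr ⟨startOf r S a.val, ?_, ?_⟩
      · simp only [starts, mem_filter, mem_range]
        exact ⟨lt_of_le_of_lt (startOf_le r S a.val) a.isLt, startOf_idem r S a.val⟩
      · ext j; rw [mem_domP_part]; simp
    · intro hb
      obtain ⟨k, hk, rfl⟩ := mem_image.mp hb
      simp only [starts, mem_filter, mem_range] at hk
      refine ⟨⟨k, hk.1⟩, ?_⟩
      ext j; rw [mem_domP_part]; simp [hk.2]
  have hinj : Set.InjOn
      (fun k => (univ : Finset (Fin n)).filter (fun j => startOf r S j.val = k))
      (starts r n S) := by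
    intro k hk k' hk' he
    simp only [starts, coe_filter, Set.mem_setOf_eq, mem_range] at hk hk'
    dsimp only at he
    have hmem : (⟨k, hk.1⟩ : Fin n) ∈
        (univ : Finset (Fin n)).filter (fun j => startOf r S j.val = k) := by
      simp [hk.2]
    rw [he] at hmem
    simp only [mem_filter, mem_univ, true_and] at hmem
    rw [← hmem, hk.2]
  have h2 : (domP r n S).parts.card = (starts r n S).card := by
    rw [h1, Finset.card_image_of_injOn hinj]
  -- nonstarts ↔ S
  have h3 : (Finset.range n).filter (fun k => ¬ startOf r S k = k)
      = S.image (fun i => i + r) := by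
    ext j
    simp only [mem_filter, mem_range, mem_image]
    constructor
    · rintro ⟨hj, hns⟩
      have hcond : 0 < r ∧ r ≤ j ∧ j - r ∈ S := by
        by_contra hc
        exact hns (startOf_of_neg hc)
      exact ⟨j - r, hcond.2.2, by omega⟩
    · rintro ⟨i, hi, rfl⟩
      have hin : i + r < n := by have := hS hi; simp at this; omega
      refine ⟨hin, ?_⟩
      rw [startOf_mem_step hr hi]
      have := startOf_le r S i
      omega
  have h4 : ((Finset.range n).filter (fun k => ¬ startOf r S k = k)).card = S.card := by
    rw [h3, Finset.card_image_of_injective _ (fun a b h => by omega)]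
  have h5 := Finset.card_filter_add_card_filter_not
    (s := Finset.range n) (p := fun k => startOf r S k = k)
  simp only [Finset.card_range] at h5
  have h6 : (starts r n S).card = ((Finset.range n).filter (fun k => startOf r S k = k)).card := rfl
  omega

/-- Membership in `S` is detected by the partition. -/
lemma mem_S_iff (hr : 0 < r) (hS : S ⊆ Finset.range (n - r)) {i : ℕ} :
    i ∈ S ↔ i + r < n ∧ startOf r S (i + r) = startOf r S i := by
  constructor
  · intro hi
    have := hS hi; simp at this
    exact ⟨by omega, startOf_mem_step hr hi⟩
  · rintro ⟨hin, heq⟩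
    by_contra hiS
    have : startOf r S (i + r) = i + r :=
      startOf_of_neg (fun h => hiS (by simpa using h.2.2))
    have := startOf_le r S i
    omega

end NoShiftProof

namespace NoShiftProof

/-- The AP-block condition appearing in `tilingCount`. -/
def APgood (r n : ℕ) (P : Finpartition (univ : Finset (Fin n))) : Prop :=
  ∀ b ∈ P.parts, ∃ k m : ℕ, 1 ≤ m ∧
    b.image (Fin.val) = (Finset.range m).image (fun t => k + t * r)

variable {r n : ℕ} {S : Finset ℕ}

lemma domP_APgood' (hr : 0 < r) (S : Finset ℕ) : APgood r n (domP r n S) :=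
  fun _ hb => domP_APgood hr hb

lemma domP_injective (hr : 0 < r) {S1 S2 : Finset ℕ}
    (hS1 : S1 ⊆ Finset.range (n - r)) (hS2 : S2 ⊆ Finset.range (n - r))
    (h : domP r n S1 = domP r n S2) : S1 = S2 := by
  have key : ∀ (i : ℕ) (hin : i + r < n),
      (startOf r S1 (i + r) = startOf r S1 i ↔ startOf r S2 (i + r) = startOf r S2 i) := by
    intro i hin
    have hi : i < n := by omega
    have h1 := @mem_domP_part r n S1 ⟨i, hi⟩ ⟨i + r, hin⟩
    have h2 := @mem_domP_part r n S2 ⟨i, hi⟩ ⟨i + r, hin⟩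
    rw [h] at h1
    simp only at h1 h2
    rw [← h1, ← h2]
  ext i
  rw [mem_S_iff hr hS1, mem_S_iff hr hS2]
  constructor
  · rintro ⟨hin, he⟩; exact ⟨hin, (key i hin).mp he⟩
  · rintro ⟨hin, he⟩; exact ⟨hin, (key i hin).mpr he⟩

/-- The link set recovered from a partition. -/
def recoverS (r n : ℕ) (P : Finpartition (univ : Finset (Fin n))) : Finset ℕ :=
  (Finset.range (n - r)).filter
    (fun i => ∃ a b : Fin n, a.val = i ∧ b.val = i + r ∧ P.part b = P.part a)

lemma recoverS_subset (P : Finpartition (univ : Finset (Fin n))) :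
    recoverS r n P ⊆ Finset.range (n - r) := Finset.filter_subset _ _

lemma mem_recoverS {P : Finpartition (univ : Finset (Fin n))} {i : ℕ} :
    i ∈ recoverS r n P ↔ i < n - r ∧
      ∃ a b : Fin n, a.val = i ∧ b.val = i + r ∧ P.part b = P.part a := by
  rw [recoverS, Finset.mem_filter, Finset.mem_range]

/-- Chains with links in `recoverS P` stay in one part of `P`. -/
lemma chain_same_part (P : Finpartition (univ : Finset (Fin n))) (k t : ℕ)
    (hlinks : ∀ u < t, k + u * r ∈ recoverS r n P) (hn : k + t * r < n) (hk : k < n) :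
    P.part ⟨k + t * r, hn⟩ = P.part ⟨k, hk⟩ := by
  induction t with
  | zero => congr 1; ext; simp
  | succ t ih =>
    have hmul : (t + 1) * r = t * r + r := by ring
    have htn : k + t * r < n := by omega
    obtain ⟨-, a, b, ha, hb, hab⟩ := mem_recoverS.mp (hlinks t (by omega))
    have hae : a = ⟨k + t * r, htn⟩ := by ext; simp [ha]
    have hbe : b = ⟨k + (t + 1) * r, hn⟩ := by ext; simp [hb]; omega
    rw [hae, hbe] at hab
    rw [hab, ih (fun u hu => hlinks u (by omega)) htn]

lemma part_eq_part_startOf (P : Finpartition (univ : Finset (Fin n))) (x : Fin n) :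
    P.part x = P.part ⟨startOf r (recoverS r n P) x.val,
      lt_of_le_of_lt (startOf_le r (recoverS r n P) x.val) x.isLt⟩ := by
  obtain ⟨t, ht, hlinks⟩ := startOf_spec r (recoverS r n P) x.val
  have h2 := chain_same_part P (startOf r (recoverS r n P) x.val) t hlinks (by omega)
    (lt_of_le_of_lt (startOf_le r (recoverS r n P) x.val) x.isLt)
  have hxe : x = ⟨startOf r (recoverS r n P) x.val + t * r, by omega⟩ := by
    ext; simp; omega
  rw [← hxe] at h2
  exact h2

lemma startOf_recoverS (hr : 0 < r) {P : Finpartition (univ : Finset (Fin n))}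
    {b : Finset (Fin n)} (hb : b ∈ P.parts)
    {k m : ℕ} (hm : 1 ≤ m) (him : b.image Fin.val = (Finset.range m).image (fun t => k + t * r))
    {t : ℕ} (ht : t < m) : startOf r (recoverS r n P) (k + t * r) = k := by
  have hmem : ∀ u, u < m → ∃ x : Fin n, x ∈ b ∧ x.val = k + u * r := by
    intro u hu
    have : k + u * r ∈ b.image Fin.val := by
      rw [him]; exact mem_image.mpr ⟨u, by simpa using hu, rfl⟩
    obtain ⟨x, hx, hxv⟩ := mem_image.mp this
    exact ⟨x, hx, hxv⟩
  obtain ⟨x0, hx0, hx0v⟩ := hmem 0 (by omega)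
  have hx0v' : x0.val = k := by simpa using hx0v
  have hkn : k < n := hx0v' ▸ x0.isLt
  have hk : startOf r (recoverS r n P) k = k := by
    apply startOf_of_neg
    rintro ⟨-, hrk, hkr⟩
    obtain ⟨-, a', b', ha', hb', hab'⟩ := mem_recoverS.mp hkr
    have hb'e : b' = x0 := by ext; omega
    rw [hb'e, P.part_eq_of_mem hb hx0] at hab'
    have h1 : a' ∈ b := by rw [hab']; exact P.mem_part (mem_univ a')
    have h2 : a'.val ∈ b.image Fin.val := mem_image.mpr ⟨a', h1, rfl⟩
    rw [him] at h2
    obtain ⟨u, -, hu⟩ := mem_image.mp h2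
    omega
  apply startOf_chain hr hk
  intro u hu
  obtain ⟨xu, hxu, hxuv⟩ := hmem u (by omega)
  obtain ⟨xu1, hxu1, hxu1v⟩ := hmem (u + 1) (by omega)
  rw [mem_recoverS]
  have hmul : (u + 1) * r = u * r + r := by ring
  have hl1 := xu1.isLt
  refine ⟨by omega, xu, xu1, hxuv, by omega, ?_⟩
  rw [P.part_eq_of_mem hb hxu, P.part_eq_of_mem hb hxu1]

lemma domP_recoverS (hr : 0 < r) {P : Finpartition (univ : Finset (Fin n))}
    (hP : APgood r n P) : domP r n (recoverS r n P) = P := by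
  apply finpartition_eq_of_part_eq
  intro a
  ext j
  rw [mem_domP_part]
  constructor
  · intro he
    have hj : j ∈ P.part ⟨startOf r (recoverS r n P) j.val,
        lt_of_le_of_lt (startOf_le r (recoverS r n P) j.val) j.isLt⟩ :=
      part_eq_part_startOf P j ▸ P.mem_part (mem_univ j)
    rw [part_eq_part_startOf P a,
      show (⟨startOf r (recoverS r n P) a.val,
          lt_of_le_of_lt (startOf_le r (recoverS r n P) a.val) a.isLt⟩ : Fin n)
        = ⟨startOf r (recoverS r n P) j.val,
          lt_of_le_of_lt (startOf_le r (recoverS r n P) j.val) j.isLt⟩ from by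
        ext; simp [he]]
    exact hj
  · intro hj
    obtain ⟨k, m, hm, him⟩ := hP (P.part a) (part_mem_parts P a)
    have hav : a.val ∈ (P.part a).image Fin.val :=
      mem_image.mpr ⟨a, P.mem_part (mem_univ a), rfl⟩
    have hjv : j.val ∈ (P.part a).image Fin.val := mem_image.mpr ⟨j, hj, rfl⟩
    rw [him] at hav hjv
    obtain ⟨ta, hta, hta'⟩ := mem_image.mp hav
    obtain ⟨tj, htj, htj'⟩ := mem_image.mp hjv
    have h1 := startOf_recoverS hr (part_mem_parts P a) hm him (mem_range.mp hta)
    have h2 := startOf_recoverS hr (part_mem_parts P a) hm him (mem_range.mp htj)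
    rw [show (j : ℕ) = k + tj * r from htj'.symm,
      show (a : ℕ) = k + ta * r from hta'.symm, h1, h2]

end NoShiftProof

namespace NoShiftProof

/-- Glue a family of fiber equivalences into a global equivalence. -/
def glueEquiv {α β : Type*} {F : α → ℕ} {G : β → ℕ}
    (k : ∀ m, {a // F a = m} ≃ {b // G b = m}) :
    {e : α ≃ β // ∀ a, G (e a) = F a} := by
  have toFun_eq : ∀ (a : α) (m : ℕ) (h : F a = m),
      ((k (F a)) ⟨a, rfl⟩ : β) = ((k m) ⟨a, h⟩ : β) := by
    rintro a m rfl; rfl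
  have invFun_eq : ∀ (b : β) (m : ℕ) (h : G b = m),
      ((k (G b)).symm ⟨b, rfl⟩ : α) = ((k m).symm ⟨b, h⟩ : α) := by
    rintro b m rfl; rfl
  refine ⟨⟨fun a => ((k (F a)) ⟨a, rfl⟩ : β), fun b => ((k (G b)).symm ⟨b, rfl⟩ : α),
    ?_, ?_⟩, ?_⟩
  · intro a
    set x := (k (F a)) ⟨a, rfl⟩ with hx
    have hGx : G x.val = F a := x.2
    show ((k (G x.val)).symm ⟨x.val, rfl⟩ : α) = a
    rw [invFun_eq x.val (F a) hGx]
    have : (⟨x.val, hGx⟩ : {b // G b = F a}) = x := rfl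
    rw [this, Equiv.symm_apply_apply]
  · intro b
    set y := (k (G b)).symm ⟨b, rfl⟩ with hy
    have hFy : F y.val = G b := y.2
    show ((k (F y.val)) ⟨y.val, rfl⟩ : β) = b
    rw [toFun_eq y.val (G b) hFy]
    have : (⟨y.val, hFy⟩ : {a // F a = G b}) = y := rfl
    rw [this, Equiv.apply_symm_apply]
  · intro a
    exact ((k (F a)) ⟨a, rfl⟩).2

lemma card_fiberwise_equiv {α β : Type*} [Fintype α] [Fintype β] [DecidableEq α] [DecidableEq β]
    (F : α → ℕ) (G : β → ℕ)
    (h : ∀ m, Fintype.card {a // F a = m} = Fintype.card {b // G b = m}) :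
    Nat.card {e : α ≃ β // ∀ a, G (e a) = F a}
      = ∏ m ∈ Finset.univ.image F, (Fintype.card {a // F a = m}).factorial := by
  classical
  obtain ⟨e0, he0⟩ := glueEquiv (fun m => Fintype.equivOfCardEq (h m))
  have he0' : ∀ b, F (e0.symm b) = G b := by
    intro b
    have := he0 (e0.symm b)
    rw [Equiv.apply_symm_apply] at this
    exact this.symm
  have hEquiv : {e : α ≃ β // ∀ a, G (e a) = F a} ≃ {p : Equiv.Perm α // F ∘ p = F} := by
    refine ⟨fun e => ⟨e.val.trans e0.symm, ?_⟩, fun p => ⟨p.val.trans e0, ?_⟩, ?_, ?_⟩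
    · funext a
      simp only [Function.comp_apply, Equiv.trans_apply]
      rw [he0' (e.val a), e.2 a]
    · intro a
      simp only [Equiv.trans_apply]
      rw [he0 (p.val a)]
      exact congrFun p.2 a
    · rintro ⟨e, he⟩
      ext a
      simp
    · rintro ⟨p, hp⟩
      ext a
      simp
  rw [Nat.card_congr hEquiv, Nat.card_eq_fintype_card, DomMulAct.stabilizer_card' F]

lemma count_eq_card_filter {γ : Type*} [DecidableEq γ] (A : Finset γ) (f : γ → ℕ) (m : ℕ) :
    Multiset.count m (A.val.map f) = (A.filter (fun x => f x = m)).card := by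
  rw [Multiset.count_map]
  simp only [Finset.card, Finset.filter]
  congr 1
  apply Multiset.filter_congr
  intro x _
  exact ⟨Eq.symm, Eq.symm⟩

lemma card_subtype_fiber {γ : Type*} [DecidableEq γ] (A : Finset γ) (f : γ → ℕ) (m : ℕ) :
    Fintype.card {a : {x // x ∈ A} // f a.val = m} = (A.filter (fun x => f x = m)).card := by
  have e : {a : {x // x ∈ A} // f a.val = m} ≃ {x : γ // x ∈ A.filter (fun x => f x = m)} :=
    ⟨fun a => ⟨a.val.val, Finset.mem_filter.mpr ⟨a.val.2, a.2⟩⟩,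
     fun x => ⟨⟨x.val, (Finset.mem_filter.mp x.2).1⟩, (Finset.mem_filter.mp x.2).2⟩,
     fun a => rfl, fun x => rfl⟩
  rw [Fintype.card_congr e, Fintype.card_coe]

/-- Counting size-preserving bijections between two finsets with equal
multisets of "sizes". -/
lemma card_sizePreserving {γ δ : Type*} [DecidableEq γ] [DecidableEq δ]
    (A : Finset γ) (B : Finset δ) (f : γ → ℕ) (g : δ → ℕ)
    (hc : A.val.map f = B.val.map g) :
    Nat.card {e : {x // x ∈ A} ≃ {y // y ∈ B} // ∀ x, g (e x).val = f x.val}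
      = ∏ m ∈ (A.val.map f).toFinset, (Multiset.count m (A.val.map f)).factorial := by
  classical
  have hfib : ∀ m, Fintype.card {a : {x // x ∈ A} // f a.val = m}
      = Fintype.card {b : {y // y ∈ B} // g b.val = m} := by
    intro m
    rw [card_subtype_fiber, card_subtype_fiber, ← count_eq_card_filter, ← count_eq_card_filter,
      hc]
  rw [card_fiberwise_equiv _ _ hfib]
  have himg : Finset.univ.image (fun a : {x // x ∈ A} => f a.val) = (A.val.map f).toFinset := by
    ext m
    simp only [Finset.mem_image, Finset.mem_univ, true_and, Multiset.mem_toFinset,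
      Multiset.mem_map]
    constructor
    · rintro ⟨a, ha⟩; exact ⟨a.val, a.2, ha⟩
    · rintro ⟨x, hx, hfx⟩; exact ⟨⟨x, hx⟩, hfx⟩
  rw [himg]
  apply Finset.prod_congr rfl
  intro m _
  rw [card_subtype_fiber, ← count_eq_card_filter]

end NoShiftProof

namespace NoShiftProof

variable {r s n : ℕ} {S : Finset ℕ}

/-- The constraint set: `π (i+r) = π i + s` for all links `i ∈ S`. -/
def Sat (r s n : ℕ) (S : Finset ℕ) (π : Equiv.Perm (Fin n)) : Prop :=
  ∀ i j : Fin n, i.val ∈ S → j.val = i.val + r → (π j).val = (π i).val + s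

instance : DecidablePred (Sat r s n S) := fun π =>
  decidable_of_iff (∀ i j : Fin n, i.val ∈ S → j.val = i.val + r →
    (π j).val = (π i).val + s) Iff.rfl

lemma mem_kerPart {α β : Type*} [Fintype α] [DecidableEq α] [DecidableEq β]
    (f : α → β) (a j : α) :
    j ∈ (Finpartition.ofSetoid (Setoid.ker f)).part a ↔ f j = f a := by
  rw [Finpartition.mem_part_ofSetoid_iff_rel]
  exact ⟨fun h => h.symm, fun h => h.symm⟩

/-- The image partition of the chain partition under a permutation. -/
def Qmap (r n : ℕ) (S : Finset ℕ) (π : Equiv.Perm (Fin n)) :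
    Finpartition (univ : Finset (Fin n)) :=
  Finpartition.ofSetoid (Setoid.ker (fun v : Fin n => startOf r S (π.symm v).val))

lemma mem_Qmap_part {π : Equiv.Perm (Fin n)} {v w : Fin n} :
    w ∈ (Qmap r n S π).part v ↔
      startOf r S (π.symm w).val = startOf r S (π.symm v).val :=
  by rw [Qmap, Finpartition.mem_part_ofSetoid_iff_rel]; exact ⟨fun h => h.symm, fun h => h.symm⟩

lemma Qmap_part_eq (π : Equiv.Perm (Fin n)) (v : Fin n) :
    (Qmap r n S π).part v = ((domP r n S).part (π.symm v)).image π := by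
  ext w
  rw [mem_Qmap_part, mem_image]
  constructor
  · intro h
    exact ⟨π.symm w, mem_domP_part.mpr h, by simp⟩
  · rintro ⟨x, hx, rfl⟩
    simpa using mem_domP_part.mp hx

lemma Qmap_parts (π : Equiv.Perm (Fin n)) :
    (Qmap r n S π).parts = (domP r n S).parts.image (fun b => b.image π) := by
  ext c
  rw [mem_parts_iff_part, mem_image]
  constructor
  · rintro ⟨v, rfl⟩
    exact ⟨(domP r n S).part (π.symm v), part_mem_parts _ _, (Qmap_part_eq π v).symm⟩
  · rintro ⟨b, hb, rfl⟩
    obtain ⟨a, rfl⟩ := (mem_parts_iff_part _).mp hb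
    refine ⟨π a, ?_⟩
    rw [Qmap_part_eq π (π a)]
    simp

/-- The index of `i` within its chain. -/
def tOf (r : ℕ) (S : Finset ℕ) (i : ℕ) : ℕ := (i - startOf r S i) / r

lemma tOf_eq (hr : 0 < r) {i t : ℕ} (ht : startOf r S i + t * r = i) :
    tOf r S i = t := by
  rw [tOf, show i - startOf r S i = t * r by omega, Nat.mul_div_cancel t hr]

lemma sat_chain {π : Equiv.Perm (Fin n)} (hπ : Sat r s n S π) {k : ℕ} (hk : k < n) {m : ℕ}
    (hlink : ∀ u, u + 1 < m → k + u * r ∈ S) (hbnd : ∀ u, u < m → k + u * r < n) :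
    ∀ t (ht : t < m), (π ⟨k + t * r, hbnd t ht⟩).val = (π ⟨k, hk⟩).val + t * s := by
  intro t
  induction t with
  | zero =>
    intro ht
    have : (⟨k + 0 * r, hbnd 0 ht⟩ : Fin n) = ⟨k, hk⟩ := by ext; simp
    rw [this]; simp
  | succ t ih =>
    intro ht
    have hmul : (t + 1) * r = t * r + r := by ring
    have h1 := hπ ⟨k + t * r, hbnd t (by omega)⟩ ⟨k + (t + 1) * r, hbnd (t + 1) ht⟩
      (hlink t (by omega)) (by simp; omega)
    have h2 := ih (by omega)
    have hmul2 : (t + 1) * s = t * s + s := by ring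
    omega

lemma domP_part_struct (hr : 0 < r) (a : Fin n) :
    ∃ m, 0 < m ∧ ((domP r n S).part a).image Fin.val
        = (Finset.range m).image (fun t => startOf r S a.val + t * r)
      ∧ (∀ u, u + 1 < m → startOf r S a.val + u * r ∈ S)
      ∧ (∀ u, u < m → startOf r S a.val + u * r < n) := by
  obtain ⟨m, hm, hfib, hlink, hbnd⟩ := fiber_structure (S := S) hr (n := n)
    (k := startOf r S a.val) (lt_of_le_of_lt (startOf_le r S a.val) a.isLt)
    (startOf_idem r S a.val)
  exact ⟨m, hm, by rw [domP_part_image, hfib], hlink, hbnd⟩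

lemma AP_image_injective {d : ℕ} (hd : 0 < d) (v : ℕ) :
    Function.Injective (fun t => v + t * d) := by
  intro a b h
  simp only at h
  have : a * d = b * d := by omega
  exact Nat.eq_of_mul_eq_mul_right hd this

lemma card_AP {d : ℕ} (hd : 0 < d) (v m : ℕ) :
    ((Finset.range m).image (fun t => v + t * d)).card = m := by
  rw [Finset.card_image_of_injective _ (AP_image_injective hd v), Finset.card_range]

lemma AP_rep_unique {d : ℕ} (hd : 0 < d) {v v' m m' : ℕ} (hm : 1 ≤ m) (hm' : 1 ≤ m')
    (h : (Finset.range m).image (fun t => v + t * d)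
       = (Finset.range m').image (fun t => v' + t * d)) : v = v' ∧ m = m' := by
  have hmm : m = m' := by
    have := congrArg Finset.card h
    rwa [card_AP hd, card_AP hd] at this
  refine ⟨?_, hmm⟩
  have h1 : v ∈ (Finset.range m').image (fun t => v' + t * d) := by
    rw [← h]; exact mem_image.mpr ⟨0, by simp; omega, by simp⟩
  have h2 : v' ∈ (Finset.range m).image (fun t => v + t * d) := by
    rw [h]; exact mem_image.mpr ⟨0, by simp; omega, by simp⟩
  obtain ⟨t1, -, ht1⟩ := mem_image.mp h1
  obtain ⟨t2, -, ht2⟩ := mem_image.mp h2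
  omega

end NoShiftProof

namespace NoShiftProof

variable {r s n : ℕ} {S : Finset ℕ} {Q : Finpartition (univ : Finset (Fin n))}

/-- Structure of the image of a chain-block under a constrained permutation. -/
lemma Qmap_block_good (hr : 0 < r) {π : Equiv.Perm (Fin n)} (hπ : Sat r s n S π) (a : Fin n) :
    ∃ m, 0 < m ∧ m = ((domP r n S).part a).card ∧
      (((domP r n S).part a).image π).image Fin.val
        = (Finset.range m).image (fun t =>
            (π ⟨startOf r S a.val, lt_of_le_of_lt (startOf_le r S a.val) a.isLt⟩).val + t * s) := by
  obtain ⟨m, hm, him, hlink, hbnd⟩ := domP_part_struct hr a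
  set k := startOf r S a.val with hkdef
  have hk : k < n := lt_of_le_of_lt (startOf_le r S a.val) a.isLt
  refine ⟨m, hm, ?_, ?_⟩
  · have h1 : ((domP r n S).part a).card = (((domP r n S).part a).image Fin.val).card :=
      (Finset.card_image_of_injective _ Fin.val_injective).symm
    rw [h1, him, card_AP hr]
  · ext y
    simp only [Finset.mem_image]
    constructor
    · rintro ⟨w, ⟨x, hx, rfl⟩, rfl⟩
      have hxv : x.val ∈ ((domP r n S).part a).image Fin.val := mem_image_of_mem _ hx
      rw [him] at hxv
      obtain ⟨t, ht, htv⟩ := mem_image.mp hxv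
      rw [Finset.mem_range] at ht
      have hxe : x = ⟨k + t * r, hbnd t ht⟩ := by ext; simp [← htv]
      refine ⟨t, by simpa using ht, ?_⟩
      rw [hxe, sat_chain hπ hk hlink hbnd t ht]
    · rintro ⟨t, ht, rfl⟩
      rw [Finset.mem_range] at ht
      have : k + t * r ∈ ((domP r n S).part a).image Fin.val := by
        rw [him]; exact mem_image.mpr ⟨t, by simpa using ht, rfl⟩
      obtain ⟨x, hx, hxv⟩ := mem_image.mp this
      have hxe : x = ⟨k + t * r, hbnd t ht⟩ := by ext; simp [hxv]
      refine ⟨π x, ⟨x, hx, rfl⟩, ?_⟩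
      rw [hxe, sat_chain hπ hk hlink hbnd t ht]

lemma Qmap_APgood (hr : 0 < r) {π : Equiv.Perm (Fin n)} (hπ : Sat r s n S π) :
    APgood s n (Qmap r n S π) := by
  intro c hc
  rw [Qmap_parts, mem_image] at hc
  obtain ⟨b, hb, rfl⟩ := hc
  obtain ⟨a, rfl⟩ := (mem_parts_iff_part _).mp hb
  obtain ⟨m, hm, -, him⟩ := Qmap_block_good hr hπ a
  exact ⟨_, m, hm, him⟩

lemma Qmap_sizes (π : Equiv.Perm (Fin n)) :
    (Qmap r n S π).parts.val.map Finset.card = (domP r n S).parts.val.map Finset.card := by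
  rw [Qmap_parts]
  have hinj : Function.Injective (fun b : Finset (Fin n) => b.image π) :=
    Finset.image_injective π.injective
  rw [Finset.image_val_of_injOn (hinj.injOn)]
  rw [Multiset.map_map]
  apply Multiset.map_congr rfl
  intro b _
  exact Finset.card_image_of_injective _ π.injective

section Build

variable (hQg : APgood s n Q)

/-- Chosen start value of an AP-block. -/
noncomputable def vOf (c : Finset (Fin n)) (hc : c ∈ Q.parts) : ℕ := (hQg c hc).choose

/-- Chosen length of an AP-block. -/
noncomputable def mOf (c : Finset (Fin n)) (hc : c ∈ Q.parts) : ℕ :=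
  (hQg c hc).choose_spec.choose

lemma vm_spec (c : Finset (Fin n)) (hc : c ∈ Q.parts) :
    1 ≤ mOf hQg c hc ∧ c.image Fin.val
      = (Finset.range (mOf hQg c hc)).image (fun t => vOf hQg c hc + t * s) :=
  (hQg c hc).choose_spec.choose_spec

lemma mOf_eq_card (hs : 0 < s) (c : Finset (Fin n)) (hc : c ∈ Q.parts) :
    mOf hQg c hc = c.card := by
  obtain ⟨hm, him⟩ := vm_spec hQg c hc
  have h1 : c.card = (c.image Fin.val).card :=
    (Finset.card_image_of_injective _ Fin.val_injective).symm
  rw [h1, him, card_AP hs]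

variable {P' : Finpartition (univ : Finset (Fin n))}
variable (e : {x // x ∈ (domP r n S).parts} ≃ {y // y ∈ Q.parts})
variable (he : ∀ x, (e x).val.card = x.val.card)

/-- Data for the block of `i`. -/
noncomputable def cOf (i : Fin n) : {y // y ∈ Q.parts} :=
  e ⟨(domP r n S).part i, part_mem_parts _ i⟩

lemma part_eq_of_startOf_eq {i j : Fin n}
    (h : startOf r S j.val = startOf r S i.val) :
    (domP r n S).part j = (domP r n S).part i :=
  (domP r n S).part_eq_of_mem (part_mem_parts _ i) (mem_domP_part.mpr h)

lemma cOf_eq_of_part_eq {i j : Fin n} (h : (domP r n S).part j = (domP r n S).part i) :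
    cOf e j = cOf e i := by
  unfold cOf
  congr 1
  exact Subtype.ext h


include he

lemma build_mem (hr : 0 < r) (hs : 0 < s) (i : Fin n) :
    tOf r S i.val < mOf hQg (cOf e i).val (cOf e i).2 ∧
    ∃ x ∈ (cOf e i).val, x.val
      = vOf hQg (cOf e i).val (cOf e i).2 + tOf r S i.val * s := by
  obtain ⟨m, hm, him, hlink, hbnd⟩ := domP_part_struct (S := S) hr i
  have hiin : i ∈ (domP r n S).part i := (domP r n S).mem_part (mem_univ i)
  have hival : i.val ∈ ((domP r n S).part i).image Fin.val := mem_image_of_mem _ hiin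
  rw [him] at hival
  obtain ⟨t, ht, htv⟩ := mem_image.mp hival
  rw [Finset.mem_range] at ht
  have htof : tOf r S i.val = t := tOf_eq hr htv
  have hmcard : m = ((domP r n S).part i).card := by
    have h1 : ((domP r n S).part i).card = (((domP r n S).part i).image Fin.val).card :=
      (Finset.card_image_of_injective _ Fin.val_injective).symm
    rw [h1, him, card_AP hr]
  have hmof : mOf hQg (cOf e i).val (cOf e i).2 = m := by
    rw [mOf_eq_card hQg hs, cOf, he ⟨(domP r n S).part i, part_mem_parts _ i⟩]
    exact hmcard.symm
  constructor
  · omega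
  · obtain ⟨-, him2⟩ := vm_spec hQg (cOf e i).val (cOf e i).2
    have : vOf hQg (cOf e i).val (cOf e i).2 + tOf r S i.val * s
        ∈ ((cOf e i).val).image Fin.val := by
      rw [him2]
      exact mem_image.mpr ⟨tOf r S i.val, by rw [Finset.mem_range]; omega, rfl⟩
    obtain ⟨x, hx, hxv⟩ := mem_image.mp this
    exact ⟨x, hx, hxv⟩

/-- The permutation built from a matching of blocks. -/
noncomputable def bFun (hr : 0 < r) (hs : 0 < s) (i : Fin n) : Fin n :=
  ⟨vOf hQg (cOf e i).val (cOf e i).2 + tOf r S i.val * s, by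
    obtain ⟨-, x, hx, hxv⟩ := build_mem hQg e he hr hs i
    exact hxv ▸ x.isLt⟩

lemma bFun_val (hr : 0 < r) (hs : 0 < s) (i : Fin n) :
    (bFun hQg e he hr hs i).val
      = vOf hQg (cOf e i).val (cOf e i).2 + tOf r S i.val * s := rfl

omit he in
lemma vOf_congr {c c' : Finset (Fin n)} (h : c = c') (hc : c ∈ Q.parts) (hc' : c' ∈ Q.parts) :
    vOf hQg c hc = vOf hQg c' hc' := by subst h; rfl

lemma bFun_mem (hr : 0 < r) (hs : 0 < s) (i : Fin n) :
    bFun hQg e he hr hs i ∈ (cOf e i).val := by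
  obtain ⟨-, x, hx, hxv⟩ := build_mem hQg e he hr hs i
  have : x = bFun hQg e he hr hs i := by ext; rw [hxv]; rfl
  rwa [this] at hx

lemma bFun_injective (hr : 0 < r) (hs : 0 < s) :
    Function.Injective (bFun hQg e he hr hs) := by
  intro i j h
  by_cases hp : (domP r n S).part j = (domP r n S).part i
  · have hc := cOf_eq_of_part_eq (S := S) e hp
    have hval : (bFun hQg e he hr hs i).val = (bFun hQg e he hr hs j).val := by rw [h]
    rw [bFun_val, bFun_val] at hval
    have hvv : vOf hQg (cOf e j).val (cOf e j).2 = vOf hQg (cOf e i).val (cOf e i).2 :=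
      vOf_congr hQg (congrArg Subtype.val hc) _ _
    have htt : tOf r S i.val = tOf r S j.val := by
      have := Nat.eq_of_mul_eq_mul_right hs (show tOf r S i.val * s = tOf r S j.val * s by omega)
      exact this
    -- same start, same index ⇒ equal
    have hst : startOf r S j.val = startOf r S i.val := by
      have := mem_domP_part.mp (hp ▸ (domP r n S).mem_part (mem_univ j))
      exact this
    obtain ⟨ti, hti, -⟩ := startOf_spec r S i.val
    obtain ⟨tj, htj, -⟩ := startOf_spec r S j.val
    have h1 : tOf r S i.val = ti := tOf_eq hr hti
    have h2 : tOf r S j.val = tj := tOf_eq hr htj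
    have htij : ti = tj := by omega
    subst htij
    ext
    omega
  · exfalso
    have h1 := bFun_mem hQg e he hr hs i
    have h2 := bFun_mem hQg e he hr hs j
    rw [h] at h1
    have hceq : (cOf e j).val = (cOf e i).val :=
      Q.eq_of_mem_parts (cOf e j).2 (cOf e i).2 h2 h1
    have : cOf e j = cOf e i := Subtype.ext hceq
    have := e.injective (this)
    exact hp (congrArg Subtype.val this)

/-- The built permutation. -/
noncomputable def bPerm (hr : 0 < r) (hs : 0 < s) : Equiv.Perm (Fin n) :=
  Equiv.ofBijective _ (Finite.injective_iff_bijective.mp (bFun_injective hQg e he hr hs))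

lemma bPerm_apply (hr : 0 < r) (hs : 0 < s) (i : Fin n) :
    bPerm hQg e he hr hs i = bFun hQg e he hr hs i := rfl

lemma bPerm_sat (hr : 0 < r) (hs : 0 < s) : Sat r s n S (bPerm hQg e he hr hs) := by
  intro i j hiS hji
  rw [bPerm_apply, bPerm_apply]
  have hst : startOf r S j.val = startOf r S i.val := by
    rw [hji]; exact startOf_mem_step hr hiS
  have hp : (domP r n S).part j = (domP r n S).part i := part_eq_of_startOf_eq hst
  have hc := cOf_eq_of_part_eq (S := S) e hp
  rw [bFun_val, bFun_val]
  have hvv : vOf hQg (cOf e j).val (cOf e j).2 = vOf hQg (cOf e i).val (cOf e i).2 :=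
    vOf_congr hQg (congrArg Subtype.val hc) _ _
  obtain ⟨ti, hti, -⟩ := startOf_spec r S i.val
  have h1 : tOf r S i.val = ti := tOf_eq hr hti
  have h2 : tOf r S j.val = ti + 1 := by
    apply tOf_eq hr
    rw [hst, hji]
    have : (ti + 1) * r = ti * r + r := by ring
    omega
  rw [h1, h2]
  have : (ti + 1) * s = ti * s + s := by ring
  omega

lemma bPerm_image (hr : 0 < r) (hs : 0 < s) (x : {x // x ∈ (domP r n S).parts}) :
    x.val.image (bPerm hQg e he hr hs) = (e x).val := by
  apply Finset.eq_of_subset_of_card_le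
  · intro w hw
    rw [mem_image] at hw
    obtain ⟨i, hi, rfl⟩ := hw
    have hpi : (domP r n S).part i = x.val := (domP r n S).part_eq_of_mem x.2 hi
    have hcx : cOf e i = e x := by
      unfold cOf; congr 1; exact Subtype.ext hpi
    rw [bPerm_apply]
    have := bFun_mem hQg e he hr hs i
    rwa [hcx] at this
  · rw [he x, Finset.card_image_of_injective _ (bPerm hQg e he hr hs).injective]

lemma bPerm_Qmap (hr : 0 < r) (hs : 0 < s) :
    Qmap r n S (bPerm hQg e he hr hs) = Q := by
  apply Finpartition.ext
  rw [Qmap_parts]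
  ext c
  rw [mem_image]
  constructor
  · rintro ⟨b, hb, rfl⟩
    have := bPerm_image hQg e he hr hs ⟨b, hb⟩
    rw [this]
    exact (e ⟨b, hb⟩).2
  · intro hc
    refine ⟨(e.symm ⟨c, hc⟩).val, (e.symm ⟨c, hc⟩).2, ?_⟩
    have := bPerm_image hQg e he hr hs (e.symm ⟨c, hc⟩)
    rw [this, Equiv.apply_symm_apply]

end Build

end NoShiftProof

namespace NoShiftProof

variable {r s n : ℕ} {S : Finset ℕ} {Q : Finpartition (univ : Finset (Fin n))}

/-- The equivalence on parts induced by a permutation. -/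
def imgEquiv (π : Equiv.Perm (Fin n)) {P Q : Finpartition (univ : Finset (Fin n))}
    (hPQ : Q.parts = P.parts.image (fun b => b.image π)) :
    {x // x ∈ P.parts} ≃ {y // y ∈ Q.parts} where
  toFun x := ⟨x.val.image π, by rw [hPQ]; exact mem_image_of_mem _ x.2⟩
  invFun y := ⟨y.val.image π.symm, by
    obtain ⟨c, hc⟩ := y
    simp only
    rw [hPQ, mem_image] at hc
    obtain ⟨b, hb, hbe⟩ := hc
    have : c.image π.symm = b := by
      rw [← hbe]; ext z; simp
    rwa [this]⟩
  left_inv x := by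
    apply Subtype.ext
    simp only
    ext z; simp
  right_inv y := by
    apply Subtype.ext
    simp only
    ext z; simp

/-- The fiber of the `Qmap` over a fixed `Q` is equivalent to the set of
size-preserving matchings. -/
noncomputable def fiberEquiv (hr : 0 < r) (hs : 0 < s) (hQg : APgood s n Q) :
    {π : {π : Equiv.Perm (Fin n) // Sat r s n S π} // Qmap r n S π.val = Q}
      ≃ {e : {x // x ∈ (domP r n S).parts} ≃ {y // y ∈ Q.parts} //
          ∀ x, (e x).val.card = x.val.card} where
  toFun p := ⟨imgEquiv p.1.1 (by
      have h := Qmap_parts (r := r) (n := n) (S := S) p.1.1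
      rw [p.2] at h
      exact h),
    fun x => Finset.card_image_of_injective _ p.1.1.injective⟩
  invFun q := ⟨⟨bPerm hQg q.1 q.2 hr hs, bPerm_sat hQg q.1 q.2 hr hs⟩,
    bPerm_Qmap hQg q.1 q.2 hr hs⟩
  left_inv p := by
    apply Subtype.ext
    apply Subtype.ext
    apply Equiv.ext
    intro i
    apply Fin.ext
    obtain ⟨⟨π, hπ⟩, hQm⟩ := p
    simp only
    rw [bPerm_apply, bFun_val]
    -- identify the block data
    set e := imgEquiv π (show Q.parts = (domP r n S).parts.image (fun b => b.image π) by
      rw [← hQm, Qmap_parts]) with hedef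
    have hc : (cOf e i).val = ((domP r n S).part i).image π := rfl
    obtain ⟨m, hm, hmc, him⟩ := Qmap_block_good hr hπ i
    obtain ⟨hm1, him1⟩ := vm_spec hQg (cOf e i).val (cOf e i).2
    have hrep := him1.symm.trans (by rw [hc, him])
    obtain ⟨hv, hmm⟩ := AP_rep_unique hs hm1 (by omega) hrep
    -- the chain index of i
    obtain ⟨m', hm', him', hlink', hbnd'⟩ := domP_part_struct (S := S) hr i
    have hmm' : m' = m := by
      have h1 : ((domP r n S).part i).card = (((domP r n S).part i).image Fin.val).card :=
        (Finset.card_image_of_injective _ Fin.val_injective).symm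
      rw [h1, him', card_AP hr] at hmc
      omega
    have hiin : i ∈ (domP r n S).part i := (domP r n S).mem_part (mem_univ i)
    have hival : i.val ∈ ((domP r n S).part i).image Fin.val := mem_image_of_mem _ hiin
    rw [him'] at hival
    obtain ⟨t, ht, htv⟩ := mem_image.mp hival
    rw [Finset.mem_range] at ht
    have htof : tOf r S i.val = t := tOf_eq hr htv
    have hie : i = ⟨startOf r S i.val + t * r, hbnd' t ht⟩ := by ext; simp [htv]
    have hval := sat_chain hπ (lt_of_le_of_lt (startOf_le r S i.val) i.isLt) hlink' hbnd' t ht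
    rw [← hie] at hval
    rw [hv, htof, hval]
  right_inv q := by
    apply Subtype.ext
    apply Equiv.ext
    intro x
    apply Subtype.ext
    exact bPerm_image hQg q.1 q.2 hr hs x

/-- Master counting formula for constrained permutations. -/
lemma card_sat_eq (hr : 0 < r) (hs : 0 < s) (S : Finset ℕ) :
    Nat.card {π : Equiv.Perm (Fin n) // Sat r s n S π}
      = Nat.card {Q : Finpartition (univ : Finset (Fin n)) //
            APgood s n Q ∧ Q.parts.val.map Finset.card
              = (domP r n S).parts.val.map Finset.card}
        * ∏ m ∈ ((domP r n S).parts.val.map Finset.card).toFinset,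
            (Multiset.count m ((domP r n S).parts.val.map Finset.card)).factorial := by
  classical
  set M := (domP r n S).parts.val.map Finset.card with hM
  set I := {Q : Finpartition (univ : Finset (Fin n)) //
      APgood s n Q ∧ Q.parts.val.map Finset.card = M} with hI
  letI : Fintype I := Fintype.ofFinite I
  set g : {π : Equiv.Perm (Fin n) // Sat r s n S π} → I :=
    fun π => ⟨Qmap r n S π.val, Qmap_APgood hr π.2, Qmap_sizes π.val⟩ with hg
  have h1 : Nat.card {π : Equiv.Perm (Fin n) // Sat r s n S π}
      = ∑ Q : I, Nat.card {π // g π = Q} := by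
    rw [Nat.card_congr (Equiv.sigmaFiberEquiv g).symm]
    rw [Nat.card_eq_fintype_card, Fintype.card_sigma]
    apply Finset.sum_congr rfl
    intro Q _
    rw [Nat.card_eq_fintype_card]
  rw [h1]
  have h2 : ∀ Q : I, Nat.card {π // g π = Q}
      = ∏ m ∈ M.toFinset, (Multiset.count m M).factorial := by
    intro Q
    have e1 : {π // g π = Q} ≃ {π : {π : Equiv.Perm (Fin n) // Sat r s n S π} //
        Qmap r n S π.val = Q.val} := by
      apply Equiv.subtypeEquivRight
      intro π
      rw [hg]
      exact ⟨fun h => by rw [← h], fun h => Subtype.ext h⟩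
    rw [Nat.card_congr e1, Nat.card_congr (fiberEquiv hr hs Q.2.1)]
    have := card_sizePreserving (domP r n S).parts Q.val.parts Finset.card Finset.card
      (by rw [Q.2.2])
    rw [← hM] at this
    rw [← this]
  rw [Finset.sum_congr rfl (fun Q _ => h2 Q), Finset.sum_const, Finset.card_univ,
    Nat.card_eq_fintype_card, smul_eq_mul]

end NoShiftProof

namespace NoShiftProof

/-- The bad event at link `i`. -/
def Bad (r s n : ℕ) (i : ℕ) (π : Equiv.Perm (Fin n)) : Prop :=
  ∃ a b : Fin n, a.val = i ∧ b.val = i + r ∧ (π b).val = (π a).val + s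

instance {r s n i : ℕ} : DecidablePred (Bad r s n i) := fun π =>
  decidable_of_iff (∃ a b : Fin n, a.val = i ∧ b.val = i + r ∧ (π b).val = (π a).val + s)
    Iff.rfl

variable {r s n : ℕ}

lemma sat_iff_bad {S : Finset ℕ} (hS : S ⊆ Finset.range (n - r)) (π : Equiv.Perm (Fin n)) :
    Sat r s n S π ↔ ∀ i ∈ S, Bad r s n i π := by
  constructor
  · intro h i hi
    have hin : i + r < n := by have := hS hi; simp at this; omega
    exact ⟨⟨i, by omega⟩, ⟨i + r, hin⟩, rfl, rfl, h ⟨i, by omega⟩ ⟨i + r, hin⟩ hi rfl⟩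
  · intro h i j hiS hji
    obtain ⟨a, b, ha, hb, hv⟩ := h i.val hiS
    have hae : a = i := by ext; rw [ha]
    have hbe : b = j := by ext; rw [hb, hji]
    rw [hae, hbe] at hv
    exact hv

lemma noShift_eq_filter (r s n : ℕ) :
    noShift r s n = Finset.univ.filter
      (fun π => ∀ i ∈ Finset.range (n - r), ¬ Bad r s n i π) := by
  apply Finset.filter_congr
  intro π _
  constructor
  · intro h i hi hbad
    obtain ⟨a, b, ha, hb, hv⟩ := hbad
    have := h a b (by omega)
    push_cast at this
    omega
  · intro h i j hji
    intro hc
    have hiL : i.val ∈ Finset.range (n - r) := by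
      rw [Finset.mem_range]
      have := j.isLt
      omega
    apply h i.val hiL
    refine ⟨i, j, rfl, hji, ?_⟩
    push_cast at hc
    omega

lemma incl_excl (r s n : ℕ) :
    ((noShift r s n).card : ℤ)
      = ∑ S ∈ (Finset.range (n - r)).powerset,
          (-1) ^ S.card * ((Finset.univ.filter (Sat r s n S)).card : ℤ) := by
  classical
  set L := Finset.range (n - r) with hL
  have hnoshift : ((noShift r s n).card : ℤ)
      = ∑ π : Equiv.Perm (Fin n), if (∀ i ∈ L, ¬ Bad r s n i π) then (1 : ℤ) else 0 := by
    rw [noShift_eq_filter, Finset.sum_boole]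
  rw [hnoshift]
  have hfactor : ∀ π : Equiv.Perm (Fin n),
      (if (∀ i ∈ L, ¬ Bad r s n i π) then (1 : ℤ) else 0)
        = ∏ i ∈ L, ((-1) * (if Bad r s n i π then (1 : ℤ) else 0) + 1) := by
    intro π
    have : ∀ i ∈ L, ((-1) * (if Bad r s n i π then (1 : ℤ) else 0) + 1)
        = (if ¬ Bad r s n i π then (1 : ℤ) else 0) := by
      intro i _
      by_cases h : Bad r s n i π <;> simp [h]
    rw [Finset.prod_congr rfl this, Finset.prod_boole]
  rw [Finset.sum_congr rfl (fun π _ => hfactor π)]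
  have hexpand : ∀ π : Equiv.Perm (Fin n),
      (∏ i ∈ L, ((-1) * (if Bad r s n i π then (1 : ℤ) else 0) + 1))
        = ∑ S ∈ L.powerset, (-1) ^ S.card * (if Sat r s n S π then (1 : ℤ) else 0) := by
    intro π
    rw [Finset.prod_add]
    apply Finset.sum_congr rfl
    intro S hS
    rw [Finset.mem_powerset] at hS
    rw [Finset.prod_const_one, mul_one, Finset.prod_mul_distrib, Finset.prod_const,
      Finset.prod_boole]
    have : (∀ i ∈ S, Bad r s n i π) ↔ Sat r s n S π := (sat_iff_bad hS π).symm
    rw [if_congr this rfl rfl]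
  rw [Finset.sum_congr rfl (fun π _ => hexpand π), Finset.sum_comm]
  apply Finset.sum_congr rfl
  intro S _
  rw [← Finset.mul_sum, Finset.sum_boole]

/-- The partition of `n` given by the block sizes of the chain partition. -/
def βS (r n : ℕ) (S : Finset ℕ) : Nat.Partition n where
  parts := (domP r n S).parts.val.map Finset.card
  parts_pos := by
    intro m hm
    rw [Multiset.mem_map] at hm
    obtain ⟨b, hb, rfl⟩ := hm
    exact Finset.card_pos.mpr ((domP r n S).nonempty_of_mem_parts hb)
  parts_sum := by
    have := (domP r n S).sum_card_parts
    simpa using this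

end NoShiftProof

namespace NoShiftProof

variable {r s n : ℕ}

lemma card_filter_βS (hr : 0 < r) (α : Nat.Partition n) :
    (((Finset.range (n - r)).powerset).filter (fun S => βS r n S = α)).card
      = tilingCount n r α := by
  classical
  rw [← Nat.card_eq_finsetCard]
  have e : {S // S ∈ ((Finset.range (n - r)).powerset).filter (fun S => βS r n S = α)}
      ≃ {P : Finpartition (Finset.univ : Finset (Fin n)) //
          (∀ b ∈ P.parts, ∃ k m : ℕ, 1 ≤ m ∧
            b.image (Fin.val) = (Finset.range m).image (fun t => k + t * r)) ∧
          P.parts.val.map Finset.card = α.parts} := by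
    refine ⟨fun S => ⟨domP r n S.val, domP_APgood' hr S.val, ?_⟩,
      fun P => ⟨recoverS r n P.val, ?_⟩, ?_, ?_⟩
    · have h := (Finset.mem_filter.mp S.2).2
      exact congrArg Nat.Partition.parts h
    · rw [Finset.mem_filter]
      refine ⟨Finset.mem_powerset.mpr (recoverS_subset _), ?_⟩
      apply Nat.Partition.ext
      show (domP r n (recoverS r n P.val)).parts.val.map Finset.card = α.parts
      rw [domP_recoverS hr P.2.1]
      exact P.2.2
    · intro S
      apply Subtype.ext
      have hSsub : S.val ⊆ Finset.range (n - r) :=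
        Finset.mem_powerset.mp (Finset.mem_filter.mp S.2).1
      exact domP_injective hr (recoverS_subset _) hSsub
        (domP_recoverS hr (domP_APgood' hr S.val))
    · intro P
      apply Subtype.ext
      exact domP_recoverS hr P.2.1
  exact Nat.card_congr e

theorem noShift_card_eq' (hr : 0 < r) (hs : 0 < s) :
    ((noShift r s n).card : ℤ) =
      ∑ α : Nat.Partition n,
        (tilingCount n s α : ℤ) * (tilingCount n r α : ℤ)
          * (-1) ^ (n - α.parts.card)
          * ∏ m ∈ Finset.Icc 1 n, ((Multiset.count m α.parts).factorial : ℤ) := by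
  classical
  rw [incl_excl r s n]
  have key : ∀ S ∈ (Finset.range (n - r)).powerset,
      (-1 : ℤ) ^ S.card * ((Finset.univ.filter (Sat r s n S)).card : ℤ)
        = (tilingCount n s (βS r n S) : ℤ) * (-1) ^ (n - (βS r n S).parts.card)
            * ∏ m ∈ Finset.Icc 1 n,
                ((Multiset.count m (βS r n S).parts).factorial : ℤ) := by
    intro S hS
    rw [Finset.mem_powerset] at hS
    have h1 : (Finset.univ.filter (Sat r s n S)).card
        = Nat.card {π : Equiv.Perm (Fin n) // Sat r s n S π} := by
      rw [Nat.card_eq_fintype_card, Fintype.card_subtype]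
    rw [h1, card_sat_eq hr hs S]
    have h2 : Nat.card {Q : Finpartition (Finset.univ : Finset (Fin n)) //
        APgood s n Q ∧ Q.parts.val.map Finset.card
          = (domP r n S).parts.val.map Finset.card}
        = tilingCount n s (βS r n S) := rfl
    rw [h2]
    -- extend the factorial product
    have h3 : ∏ m ∈ ((domP r n S).parts.val.map Finset.card).toFinset,
          (Multiset.count m ((domP r n S).parts.val.map Finset.card)).factorial
        = ∏ m ∈ Finset.Icc 1 n,
            (Multiset.count m (βS r n S).parts).factorial := by
      apply Finset.prod_subset
      · intro m hm
        rw [Multiset.mem_toFinset, Multiset.mem_map] at hm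
        obtain ⟨b, hb, rfl⟩ := hm
        rw [Finset.mem_Icc]
        constructor
        · exact Finset.card_pos.mpr ((domP r n S).nonempty_of_mem_parts hb)
        · have := Finset.card_le_univ b
          simpa using this
      · intro m _ hm
        rw [Multiset.mem_toFinset] at hm
        have : Multiset.count m ((domP r n S).parts.val.map Finset.card) = 0 :=
          Multiset.count_eq_zero.mpr hm
        rw [this]
        rfl
    rw [h3]
    -- the sign
    have h4 : S.card = n - (βS r n S).parts.card := by
      have h5 := domP_parts_card (S := S) hr hS
      have h6 : Multiset.card ((βS r n S).parts) = (domP r n S).parts.card := by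
        show Multiset.card ((domP r n S).parts.val.map Finset.card) = _
        rw [Multiset.card_map]
        rfl
      omega
    rw [h4]
    push_cast
    ring
  rw [Finset.sum_congr rfl key]
  rw [← Finset.sum_fiberwise ((Finset.range (n - r)).powerset) (βS r n)
    (fun S => (tilingCount n s (βS r n S) : ℤ) * (-1) ^ (n - (βS r n S).parts.card)
      * ∏ m ∈ Finset.Icc 1 n, ((Multiset.count m (βS r n S).parts).factorial : ℤ))]
  apply Finset.sum_congr rfl
  intro α _
  have hconst : ∀ S ∈ ((Finset.range (n - r)).powerset).filter (fun S => βS r n S = α),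
      (tilingCount n s (βS r n S) : ℤ) * (-1) ^ (n - (βS r n S).parts.card)
        * ∏ m ∈ Finset.Icc 1 n, ((Multiset.count m (βS r n S).parts).factorial : ℤ)
      = (tilingCount n s α : ℤ) * (-1) ^ (n - α.parts.card)
        * ∏ m ∈ Finset.Icc 1 n, ((Multiset.count m α.parts).factorial : ℤ) := by
    intro S hSf
    rw [(Finset.mem_filter.mp hSf).2]
  rw [Finset.sum_congr rfl hconst, Finset.sum_const, card_filter_βS hr α]
  push_cast
  ring

end NoShiftProof

end NoShiftAux

/-- For all positive `r`, `s`, `n`: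
`a_{r,s}(n) = Σ_α C^{(n,s)}_α · C^{(n,r)}_α · (-1)^{n-(a_1+⋯+a_n)} · a_1!·a_2!⋯a_n!`,
where `α` ranges over the partitions of `n` and `a_m` is the multiplicity of the
part `m` in `α` (so that `a_1 + ⋯ + a_n` is the number of parts of `α`). -/
theorem noShift_card_eq (r s n : ℕ) (hr : 0 < r) (hs : 0 < s) (hn : 0 < n) :
    ((noShift r s n).card : ℤ) =
      ∑ α : Nat.Partition n,
        (tilingCount n s α : ℤ) * (tilingCount n r α : ℤ)
          * (-1) ^ (n - α.parts.card)
          * ∏ m ∈ Finset.Icc 1 n, ((Multiset.count m α.parts).factorial : ℤ) := by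
  exact NoShiftProof.noShift_card_eq' hr hs
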